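/- arXiv:1608.03329 — 4 statements merged into one kernel-verified Lean document; each statement's English description precedes it below -/
import Mathlib

section
/- For all integers a and b, 3 divides the determinant of M₁(a,b) if and only if either (a ≡ 0 (mod 3) and b ≡ 2 (mod 3)) or (a ≡ 1 (mod 3) and b ≡ 1 (mod 3)). (By Cappell–Shaneson's criterion, this is exactly the condition for the two-bridge slice knot K₁(a,b) to admit an irregular three-fold dihedral branched cover.) -/
open Matrix

def M1 (a b : ℤ) : Matrix (Fin 6) (Fin 6) ℤ :=
  !![-2*a,    1,    0,    0,    0,    0;
        1,    2,   -1,    0,    0,    0;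
        0,   -1, -2*b,    1,    0,    0;
        0,    0,    1,   -2,   -1,    0;
        0,    0,    0,   -1,  2*a,    1;
        0,    0,    0,    0,    1,  2*b]

set_option maxRecDepth 8000 in
set_option maxHeartbeats 2000000 in
lemma det_M1 (a b : ℤ) :
    (M1 a b).det = -1 + 4*b - 4*b^2 + 16*a*b - 32*a*b^2 - 64*a^2*b^2 := by
  simp [M1, Matrix.det_succ_row_zero, Fin.sum_univ_succ, Fin.succAbove, Fin.ext_iff]
  ring

lemma zmod3_key (x y : ZMod 3) :
    (-1 + 4*y - 4*y^2 + 16*x*y - 32*x*y^2 - 64*x^2*y^2 = 0) ↔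
      (x = 0 ∧ y = 2) ∨ (x = 1 ∧ y = 1) := by
  revert x y; decide

theorem three_dvd_det_M1_iff (a b : ℤ) :
    (3 : ℤ) ∣ (M1 a b).det ↔ (a % 3 = 0 ∧ b % 3 = 2) ∨ (a % 3 = 1 ∧ b % 3 = 1) := by
  rw [show ((3:ℤ) ∣ (M1 a b).det ↔ (((M1 a b).det : ZMod 3) = 0)) from by
    rw [ZMod.intCast_zmod_eq_zero_iff_dvd]; norm_num, det_M1]
  push_cast
  rw [zmod3_key]
  have h0 : ((a : ZMod 3) = 0 ↔ a % 3 = 0) := by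
    rw [show (0:ZMod 3) = ((0:ℤ):ZMod 3) by norm_num, ZMod.intCast_eq_intCast_iff,
      Int.ModEq]; norm_num
  have h1 : ((a : ZMod 3) = 1 ↔ a % 3 = 1) := by
    rw [show (1:ZMod 3) = ((1:ℤ):ZMod 3) by norm_num, ZMod.intCast_eq_intCast_iff,
      Int.ModEq]; norm_num
  have h2 : ((b : ZMod 3) = 2 ↔ b % 3 = 2) := by
    rw [show (2:ZMod 3) = ((2:ℤ):ZMod 3) by norm_num, ZMod.intCast_eq_intCast_iff,
      Int.ModEq]; norm_num
  have h1b : ((b : ZMod 3) = 1 ↔ b % 3 = 1) := by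
    rw [show (1:ZMod 3) = ((1:ℤ):ZMod 3) by norm_num, ZMod.intCast_eq_intCast_iff,
      Int.ModEq]; norm_num
  rw [h0, h1, h2, h1b]
end

section
/- For all integers a and b, 3 divides the determinant of M₂(a,b) if and only if either (a ≡ 0 (mod 3) and b ≡ 1 (mod 3)) or (a ≡ 1 (mod 3) and b ≡ 0 (mod 3)). (By Cappell–Shaneson's criterion, this is exactly the condition for the two-bridge slice knot K₂(a,b) to admit an irregular three-fold dihedral branched cover.) -/
set_option maxRecDepth 8000
set_option maxHeartbeats 2000000


open Matrix

def M2 (a b : ℤ) : Matrix (Fin 6) (Fin 6) ℤ :=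
  !![-2*a,    1,    0,    0,    0,    0;
        1,    2,   -1,    0,    0,    0;
        0,   -1, -2*b,    1,    0,    0;
        0,    0,    1,  2*a,   -1,    0;
        0,    0,    0,   -1,   -2,    1;
        0,    0,    0,    0,    1,  2*b]
theorem three_dvd_det_M2_iff (a b : ℤ) :
    (3 : ℤ) ∣ (M2 a b).det ↔ (a % 3 = 0 ∧ b % 3 = 1) ∨ (a % 3 = 1 ∧ b % 3 = 0) := by
  have hdet : (M2 a b).det =
      -64*a^2*b^2 - 32*a^2*b - 32*a*b^2 - 24*a*b - 4*a^2 - 4*b^2 - 4*a - 4*b - 1 := by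
    simp [M2, Matrix.det_succ_row_zero, Fin.sum_univ_succ]
    norm_num [Fin.succAbove, Fin.lt_def]
    simp [Matrix.cons_val, Fin.castSucc]
    ring
  have ha0 : a % 3 = 0 ↔ (a : ZMod 3) = 0 := by
    rw [ZMod.intCast_zmod_eq_zero_iff_dvd, Int.dvd_iff_emod_eq_zero]; norm_num
  have hb0 : b % 3 = 0 ↔ (b : ZMod 3) = 0 := by
    rw [ZMod.intCast_zmod_eq_zero_iff_dvd, Int.dvd_iff_emod_eq_zero]; norm_num
  have ha1 : a % 3 = 1 ↔ (a : ZMod 3) = 1 := by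
    rw [show ((1 : ZMod 3)) = ((1 : ℤ) : ZMod 3) by norm_num,
      ZMod.intCast_eq_intCast_iff, Int.ModEq]
    norm_num
  have hb1 : b % 3 = 1 ↔ (b : ZMod 3) = 1 := by
    rw [show ((1 : ZMod 3)) = ((1 : ℤ) : ZMod 3) by norm_num,
      ZMod.intCast_eq_intCast_iff, Int.ModEq]
    norm_num
  rw [hdet, ha0, ha1, hb0, hb1, show (3:ℤ) = ((3:ℕ):ℤ) by norm_num,
    ← ZMod.intCast_zmod_eq_zero_iff_dvd]
  push_cast
  generalize (a : ZMod 3) = x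
  generalize (b : ZMod 3) = y
  revert x y
  decide
end

section
/- Let a and b be integers with a ≡ 0 (mod 3) and b ≡ 2 (mod 3), and let M̄ be the reduction of M₁(a,b) modulo 3, a 6×6 matrix over ℤ/3ℤ. Then a vector v ∈ (ℤ/3ℤ)⁶ satisfies M̄ · v = 0 if and only if v = 0, v = β, or v = −β, where β = (1, 0, 1, 1, −1, 1). In particular, the mod 3 kernel of M₁(a,b) is one-dimensional, spanned by β. -/
open Matrix

private lemma c5 {α : Type*} (x : α) (u : Fin 5 → α) :
    Matrix.vecCons x u 5 = u 4 := rfl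
private lemma c4 {α : Type*} (x : α) (u : Fin 4 → α) :
    Matrix.vecCons x u 4 = u 3 := rfl
private lemma c3 {α : Type*} (x : α) (u : Fin 3 → α) :
    Matrix.vecCons x u 3 = u 2 := rfl
private lemma c2 {α : Type*} (x : α) (u : Fin 2 → α) :
    Matrix.vecCons x u 2 = u 1 := rfl
private lemma c1 {α : Type*} (x : α) (u : Fin 1 → α) :
    Matrix.vecCons x u 1 = u 0 := rfl

set_option maxRecDepth 100000 in
set_option maxHeartbeats 4000000 in
theorem mod3_kernel_M1_case1 (a b : ℤ) (ha : a % 3 = 0) (hb : b % 3 = 2)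
    (v : Fin 6 → ZMod 3) :
    ((M1 a b).map (Int.cast : ℤ → ZMod 3)).mulVec v = 0 ↔
      v = 0 ∨ v = ![1, 0, 1, 1, -1, 1] ∨ v = -![1, 0, 1, 1, -1, 1] := by
  have hA : (a : ZMod 3) = 0 := by
    rw [ZMod.intCast_zmod_eq_zero_iff_dvd]; omega
  have hB : (b : ZMod 3) = 2 := by
    have : ((b : ℤ) : ZMod 3) = ((2 : ℤ) : ZMod 3) := by
      rw [ZMod.intCast_eq_intCast_iff]
      show b % 3 = 2 % 3
      omega
    simpa using this
  have hM : (M1 a b).map (Int.cast : ℤ → ZMod 3) =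
      !![0, 1, 0, 0, 0, 0;
         1, 2, -1, 0, 0, 0;
         0, -1, -4, 1, 0, 0;
         0, 0, 1, -2, -1, 0;
         0, 0, 0, -1, 0, 1;
         0, 0, 0, 0, 1, 4] := by
    ext i j
    fin_cases i <;> fin_cases j <;>
      simp [M1, hA, hB, c5, c4, c3, c2, c1, Matrix.cons_val_zero, Matrix.vecHead, Matrix.vecTail] <;>
      push_cast [hA, hB] <;> ring
  rw [hM]
  revert v
  decide
end

section
/- Let p be an odd prime. For all integers a and b, p divides the determinant of M₁(a,b) if and only if p divides 8ab + 2b − 1. -/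
set_option maxRecDepth 8000
set_option maxHeartbeats 2000000


open Matrix

theorem prime_dvd_det_M1_iff (p : ℕ) (hp : p.Prime) (hodd : Odd p) (a b : ℤ) :
    (p : ℤ) ∣ (M1 a b).det ↔ (p : ℤ) ∣ (8*a*b + 2*b - 1) := by
  have h : (M1 a b).det = -(8*a*b + 2*b - 1)^2 := by
    simp [M1, Matrix.det_succ_row_zero, Fin.sum_univ_succ, Fin.succAbove]
    ring
  rw [h]
  have hpp : Prime (p : ℤ) := Nat.prime_iff_prime_int.mp hp
  constructor
  · intro hd
    have : (p : ℤ) ∣ (8*a*b + 2*b - 1)^2 := (dvd_neg.mp hd)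
    exact hpp.dvd_of_dvd_pow this
  · intro hd
    exact dvd_neg.mpr (hd.pow (by norm_num))
end
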